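/- Let x_1,…,x_n ∈ ℝ^d be distinct points, m ∈ ℝ^n, let P_1,…,P_{p+1} ∈ ℝ^d and ρ_1,…,ρ_p ≥ 0, and let ν = Σ_α ρ_α (l^α)_# λ_{[0,1]} with l^α(t) = (1−t)P_α + t P_{α+1}. Assume hypothesis (H): ⟨P_{α+1} − P_α, x_i − x_j⟩ ≠ 0 for every α and every pair i ≠ j. Then the dual functional g(φ) = ∫ min_{1≤i≤n} (‖x − x_i‖² − φ_i) dν(x) + Σ_{i=1}^n m_i φ_i is differentiable at every φ ∈ ℝ^n, with gradient given coordinatewise by ∂g/∂φ_i (φ) = m_i − ν(Lag_i(φ)). -/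

import Mathlib

open scoped RealInnerProductSpace
open MeasureTheory

/-- The `i`-th Laguerre cell for sites `x` and weights `φ`. -/
def Lag {d n : ℕ} (x : Fin n → EuclideanSpace ℝ (Fin d)) (φ : Fin n → ℝ) (i : Fin n) :
    Set (EuclideanSpace ℝ (Fin d)) :=
  {y | ∀ j, ‖y - x i‖ ^ 2 - φ i ≤ ‖y - x j‖ ^ 2 - φ j}

/-- The polyline measure `ν = Σ_α ρ_α (l^α)_# λ_{[0,1]}`. -/
noncomputable def polylineMeasure {d p : ℕ} (P : Fin (p + 1) → EuclideanSpace ℝ (Fin d))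
    (ρ : Fin p → ℝ) : Measure (EuclideanSpace ℝ (Fin d)) :=
  ∑ α : Fin p, ENNReal.ofReal (ρ α) •
    Measure.map (fun t : ℝ => (1 - t) • P α.castSucc + t • P α.succ)
      (volume.restrict (Set.Icc (0 : ℝ) 1))

theorem dual_functional_differentiable_with_gradient {d n p : ℕ}
    (x : Fin n → EuclideanSpace ℝ (Fin d)) (hx : Function.Injective x)
    (m : Fin n → ℝ)
    (P : Fin (p + 1) → EuclideanSpace ℝ (Fin d)) (ρ : Fin p → ℝ)
    (hρ : ∀ α, 0 ≤ ρ α)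
    (hH : ∀ (α : Fin p) (i j : Fin n), i ≠ j →
      ⟪P α.succ - P α.castSucc, x i - x j⟫ ≠ 0)
    (φ : Fin n → ℝ) :
    HasFDerivAt
      (fun ψ : Fin n → ℝ =>
        (∫ y, (⨅ i, (‖y - x i‖ ^ 2 - ψ i)) ∂(polylineMeasure P ρ)) + ∑ i, m i * ψ i)
      (∑ i : Fin n, (m i - (polylineMeasure P ρ (Lag x φ i)).toReal) •
        (ContinuousLinearMap.proj i : (Fin n → ℝ) →L[ℝ] ℝ))
      φ := by
  classical
  set ν := polylineMeasure P ρ with hνdef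
  have hlcont : ∀ α : Fin p,
      Continuous fun t : ℝ => (1 - t) • P α.castSucc + t • P α.succ := fun α =>
    ((continuous_const.sub continuous_id).smul continuous_const).add
      (continuous_id.smul continuous_const)
  haveI : IsFiniteMeasure ν := by
    constructor
    rw [hνdef, polylineMeasure, Measure.finset_sum_apply, ENNReal.sum_lt_top]
    intro α _
    rw [Measure.smul_apply, smul_eq_mul]
    refine ENNReal.mul_lt_top ENNReal.ofReal_lt_top ?_
    rw [Measure.map_apply (hlcont α).measurable MeasurableSet.univ, Set.preimage_univ,
      Measure.restrict_apply_univ, Real.volume_Icc]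
    exact ENNReal.ofReal_lt_top
  rcases Nat.eq_zero_or_pos n with hn | hn
  · subst hn
    simp only [Finset.univ_eq_empty, Finset.sum_empty, add_zero, Real.iInf_of_isEmpty]
    exact hasFDerivAt_const _ φ
  haveI : Nonempty (Fin n) := ⟨⟨0, hn⟩⟩
  -- continuity facts
  have hcont : ∀ (i : Fin n) (r : ℝ),
      Continuous fun y : EuclideanSpace ℝ (Fin d) => ‖y - x i‖ ^ 2 - r := fun i r =>
    (((continuous_id.sub continuous_const).norm.pow 2).sub continuous_const)
  have hIcont : ∀ ψ : Fin n → ℝ,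
      Continuous fun y : EuclideanSpace ℝ (Fin d) => ⨅ i, (‖y - x i‖ ^ 2 - ψ i) := by
    intro ψ
    have h1 : (fun y : EuclideanSpace ℝ (Fin d) => ⨅ i, (‖y - x i‖ ^ 2 - ψ i))
        = fun y => Finset.univ.inf' Finset.univ_nonempty (fun i => ‖y - x i‖ ^ 2 - ψ i) := by
      funext y
      rw [Finset.inf'_univ_eq_ciInf]
    rw [h1]
    exact Continuous.finset_inf'_apply Finset.univ_nonempty fun i _ => hcont i (ψ i)
  have hLagMeas : ∀ i, MeasurableSet (Lag x φ i) := by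
    intro i
    have h1 : Lag x φ i
        = ⋂ j, {y : EuclideanSpace ℝ (Fin d) | ‖y - x i‖ ^ 2 - φ i ≤ ‖y - x j‖ ^ 2 - φ j} := by
      ext y
      simp [Lag, Set.mem_iInter]
    rw [h1]
    exact MeasurableSet.iInter fun j =>
      measurableSet_le (hcont i (φ i)).measurable (hcont j (φ j)).measurable
  -- tie set
  set T : Set (EuclideanSpace ℝ (Fin d)) :=
    ⋃ (i : Fin n) (j : Fin n) (_ : i ≠ j),
      {y | ‖y - x i‖ ^ 2 - φ i = ‖y - x j‖ ^ 2 - φ j} with hTdef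
  have hTmeas : MeasurableSet T := by
    refine MeasurableSet.iUnion fun i => MeasurableSet.iUnion fun j =>
      MeasurableSet.iUnion fun _ => ?_
    exact measurableSet_eq_fun (hcont i (φ i)).measurable (hcont j (φ j)).measurable
  have hTnull : ν T = 0 := by
    rw [hνdef, polylineMeasure, Measure.finset_sum_apply]
    refine Finset.sum_eq_zero fun α _ => ?_
    rw [Measure.smul_apply, Measure.map_apply (hlcont α).measurable hTmeas]
    have hpre : (fun t : ℝ => (1 - t) • P α.castSucc + t • P α.succ) ⁻¹' T
        = ⋃ (i : Fin n) (j : Fin n) (_ : i ≠ j),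
          {t : ℝ | ‖((1 - t) • P α.castSucc + t • P α.succ) - x i‖ ^ 2 - φ i
            = ‖((1 - t) • P α.castSucc + t • P α.succ) - x j‖ ^ 2 - φ j} := by
      rw [hTdef]
      simp only [Set.preimage_iUnion]
      rfl
    rw [hpre]
    have hz : (volume.restrict (Set.Icc (0:ℝ) 1))
        (⋃ (i : Fin n) (j : Fin n) (_ : i ≠ j),
          {t : ℝ | ‖((1 - t) • P α.castSucc + t • P α.succ) - x i‖ ^ 2 - φ i
            = ‖((1 - t) • P α.castSucc + t • P α.succ) - x j‖ ^ 2 - φ j}) = 0 := by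
      refine measure_iUnion_null fun i => measure_iUnion_null fun j =>
        measure_iUnion_null fun hij => ?_
      refine Set.Subsingleton.measure_zero ?_ _
      intro t₁ ht₁ t₂ ht₂
      simp only [Set.mem_setOf_eq] at ht₁ ht₂
      set l : ℝ → EuclideanSpace ℝ (Fin d) :=
        fun t => (1 - t) • P α.castSucc + t • P α.succ with hldef
      have h0 : ⟪l t₁ - l t₂, x i - x j⟫ = 0 := by
        have e1 : ‖l t₁ - x i‖ ^ 2 - ‖l t₁ - x j‖ ^ 2 = φ i - φ j := by
          simp only [hldef] at ht₁ ⊢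
          linarith
        have e2 : ‖l t₂ - x i‖ ^ 2 - ‖l t₂ - x j‖ ^ 2 = φ i - φ j := by
          simp only [hldef] at ht₂ ⊢
          linarith
        rw [norm_sub_sq_real, norm_sub_sq_real] at e1 e2
        rw [inner_sub_left, inner_sub_right, inner_sub_right]
        linarith
      have h2 : l t₁ - l t₂ = (t₁ - t₂) • (P α.succ - P α.castSucc) := by
        simp only [hldef, sub_smul, smul_sub, one_smul]
        abel
      rw [h2, real_inner_smul_left] at h0
      rcases mul_eq_zero.mp h0 with h | h
      · exact sub_eq_zero.mp h
      · exact absurd h (hH α i j hij)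
    rw [hz, smul_zero]
  have hae : ∀ᵐ y ∂ν, y ∉ T := measure_eq_zero_iff_ae_notMem.mp hTnull
  -- the derivative integrand
  set F' : EuclideanSpace ℝ (Fin d) → (Fin n → ℝ) →L[ℝ] ℝ :=
    fun y => ∑ i, Set.indicator (Lag x φ i \ T)
      (fun _ => -(ContinuousLinearMap.proj i : (Fin n → ℝ) →L[ℝ] ℝ)) y with hF'def
  have hF'meas : AEStronglyMeasurable F' ν := by
    refine StronglyMeasurable.aestronglyMeasurable ?_
    refine Finset.stronglyMeasurable_fun_sum _ fun i _ => ?_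
    exact stronglyMeasurable_const.indicator ((hLagMeas i).diff hTmeas)
  -- a.e. differentiability
  have hdiff : ∀ᵐ y ∂ν, HasFDerivAt
      (fun ψ : Fin n → ℝ => ⨅ i, (‖y - x i‖ ^ 2 - ψ i)) (F' y) φ := by
    filter_upwards [hae] with y hy
    obtain ⟨i, hi⟩ := Finite.exists_min fun i : Fin n => ‖y - x i‖ ^ 2 - φ i
    have hstrict : ∀ j, j ≠ i → ‖y - x i‖ ^ 2 - φ i < ‖y - x j‖ ^ 2 - φ j := by
      intro j hj
      rcases lt_or_eq_of_le (hi j) with h | h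
      · exact h
      · exact absurd (Set.mem_iUnion.2 ⟨i, Set.mem_iUnion.2 ⟨j,
          Set.mem_iUnion.2 ⟨fun hc => hj (hc.symm), h⟩⟩⟩) hy
    have hF'y : F' y = -(ContinuousLinearMap.proj i : (Fin n → ℝ) →L[ℝ] ℝ) := by
      simp only [hF'def]
      rw [Finset.sum_eq_single i]
      · have hmem : y ∈ Lag x φ i \ T := ⟨hi, hy⟩
        exact Set.indicator_of_mem hmem _
      · intro j _ hj
        refine Set.indicator_of_notMem ?_ _
        rintro ⟨hjlag, -⟩
        have h1 := hjlag i
        have h2 := hstrict j hj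
        linarith
      · intro h
        exact absurd (Finset.mem_univ i) h
    have hev : (fun ψ : Fin n → ℝ => ⨅ j, (‖y - x j‖ ^ 2 - ψ j))
        =ᶠ[nhds φ] fun ψ => ‖y - x i‖ ^ 2 - ψ i := by
      have hj : ∀ j : Fin n, ∀ᶠ ψ : Fin n → ℝ in nhds φ,
          ‖y - x i‖ ^ 2 - ψ i ≤ ‖y - x j‖ ^ 2 - ψ j := by
        intro j
        by_cases hji : j = i
        · subst hji
          exact Filter.Eventually.of_forall fun _ => le_rfl
        · have hcψ : Continuous fun ψ : Fin n → ℝ =>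
              (‖y - x j‖ ^ 2 - ψ j) - (‖y - x i‖ ^ 2 - ψ i) :=
            (continuous_const.sub (continuous_apply j)).sub
              (continuous_const.sub (continuous_apply i))
          have hpos : (0:ℝ) < (‖y - x j‖ ^ 2 - φ j) - (‖y - x i‖ ^ 2 - φ i) := by
            have := hstrict j hji
            linarith
          filter_upwards [(hcψ.tendsto φ).eventually (eventually_gt_nhds hpos)] with ψ h
          linarith
      filter_upwards [Filter.eventually_all.mpr hj] with ψ hψ
      exact le_antisymm (ciInf_le (Set.Finite.bddBelow (Set.finite_range _)) i) (le_ciInf hψ)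
    have hbase : HasFDerivAt (fun ψ : Fin n → ℝ => ‖y - x i‖ ^ 2 - ψ i)
        (-(ContinuousLinearMap.proj i : (Fin n → ℝ) →L[ℝ] ℝ)) φ := by
      have h := (hasFDerivAt_const (‖y - x i‖ ^ 2) φ).sub
        ((ContinuousLinearMap.proj i : (Fin n → ℝ) →L[ℝ] ℝ).hasFDerivAt (x := φ))
      rw [zero_sub] at h
      exact h
    rw [hF'y]
    exact hbase.congr_of_eventuallyEq hev
  -- Lipschitz bound
  have hlip : ∀ᵐ y ∂ν, LipschitzOnWith (Real.nnabs ((fun _ => (1:ℝ)) y))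
      (fun ψ : Fin n → ℝ => ⨅ j, (‖y - x j‖ ^ 2 - ψ j)) (Metric.ball φ 1) := by
    refine Filter.Eventually.of_forall fun y => ?_
    have hL : LipschitzWith 1 (fun ψ : Fin n → ℝ => ⨅ j, (‖y - x j‖ ^ 2 - ψ j)) := by
      refine LipschitzWith.of_dist_le_mul fun a b => ?_
      have key : ∀ a b : Fin n → ℝ,
          (⨅ j, (‖y - x j‖ ^ 2 - a j)) - (⨅ j, (‖y - x j‖ ^ 2 - b j)) ≤ dist a b := by
        intro a b
        obtain ⟨j, hj⟩ := Finite.exists_min fun j : Fin n => ‖y - x j‖ ^ 2 - b j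
        have h1 : (⨅ k, (‖y - x k‖ ^ 2 - b k)) = ‖y - x j‖ ^ 2 - b j :=
          le_antisymm (ciInf_le (Set.Finite.bddBelow (Set.finite_range _)) j) (le_ciInf hj)
        have h2 : (⨅ k, (‖y - x k‖ ^ 2 - a k)) ≤ ‖y - x j‖ ^ 2 - a j :=
          ciInf_le (Set.Finite.bddBelow (Set.finite_range _)) j
        have h3 : dist (a j) (b j) ≤ dist a b := dist_le_pi_dist a b j
        rw [Real.dist_eq] at h3
        have h4 : b j - a j ≤ |a j - b j| := by
          rw [abs_sub_comm]
          exact le_abs_self _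
        rw [h1]
        linarith
      rw [Real.dist_eq, NNReal.coe_one, one_mul, abs_sub_le_iff]
      refine ⟨key a b, ?_⟩
      have := key b a
      rwa [dist_comm] at this
    have h1 : Real.nnabs ((fun _ => (1:ℝ)) y) = 1 := by
      simp
    rw [h1]
    exact hL.lipschitzOnWith
  have hbound : Integrable (fun _ : EuclideanSpace ℝ (Fin d) => (1:ℝ)) ν := integrable_const _
  have hFmeas : ∀ᶠ ψ : Fin n → ℝ in nhds φ, AEStronglyMeasurable
      (fun y : EuclideanSpace ℝ (Fin d) => ⨅ i, (‖y - x i‖ ^ 2 - ψ i)) ν :=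
    Filter.Eventually.of_forall fun ψ => (hIcont ψ).aestronglyMeasurable
  have hFint : Integrable (fun y : EuclideanSpace ℝ (Fin d) => ⨅ i, (‖y - x i‖ ^ 2 - φ i)) ν := by
    rw [hνdef, polylineMeasure, integrable_finset_sum_measure]
    intro α _
    refine Integrable.smul_measure ?_ ENNReal.ofReal_ne_top
    rw [integrable_map_measure (hIcont φ).aestronglyMeasurable
      (hlcont α).measurable.aemeasurable]
    exact ((hIcont φ).comp (hlcont α)).integrableOn_Icc
  have main := (hasFDerivAt_integral_of_dominated_loc_of_lip (𝕜 := ℝ)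
    (F := fun (ψ : Fin n → ℝ) (y : EuclideanSpace ℝ (Fin d)) => ⨅ i, (‖y - x i‖ ^ 2 - ψ i))
    (F' := F') (x₀ := φ) (bound := fun _ => (1:ℝ)) (Metric.ball_mem_nhds φ one_pos)
    hFmeas hFint hF'meas hlip hbound hdiff).2
  have hF'int_eq : ∫ y, F' y ∂ν = ∑ i, (ν (Lag x φ i)).toReal •
      (-(ContinuousLinearMap.proj i : (Fin n → ℝ) →L[ℝ] ℝ)) := by
    have hInt : ∀ i ∈ Finset.univ, Integrable (fun y => Set.indicator (Lag x φ i \ T)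
        (fun _ => -(ContinuousLinearMap.proj i : (Fin n → ℝ) →L[ℝ] ℝ)) y) ν := by
      intro i _
      exact (integrable_const (-(ContinuousLinearMap.proj i : (Fin n → ℝ) →L[ℝ] ℝ))).indicator ((hLagMeas i).diff hTmeas)
    rw [hF'def, integral_finset_sum _ hInt]
    refine Finset.sum_congr rfl fun i _ => ?_
    rw [integral_indicator_const _ ((hLagMeas i).diff hTmeas), measureReal_def, measure_diff_null hTnull]
  have hlin : HasFDerivAt (fun ψ : Fin n → ℝ => ∑ i, m i * ψ i)
      (∑ i, m i • (ContinuousLinearMap.proj i : (Fin n → ℝ) →L[ℝ] ℝ)) φ := by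
    have heq : (fun ψ : Fin n → ℝ => ∑ i, m i * ψ i)
        = ⇑(∑ i, m i • (ContinuousLinearMap.proj i : (Fin n → ℝ) →L[ℝ] ℝ)) := by
      funext ψ
      simp [ContinuousLinearMap.sum_apply, ContinuousLinearMap.smul_apply,
        ContinuousLinearMap.proj_apply, smul_eq_mul]
    rw [heq]
    exact (∑ i, m i • (ContinuousLinearMap.proj i : (Fin n → ℝ) →L[ℝ] ℝ)).hasFDerivAt
  have total := main.add hlin
  rw [hF'int_eq] at total
  convert total using 1
  case e'_4 | e'_5 | e'_6 | e'_8 | e'_9 | e'_11 => rfl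
  rw [← Finset.sum_add_distrib]
  refine Finset.sum_congr rfl fun i _ => ?_
  refine ContinuousLinearMap.ext fun ψ => ?_
  simp only [ContinuousLinearMap.smul_apply, ContinuousLinearMap.add_apply,
    ContinuousLinearMap.neg_apply, ContinuousLinearMap.proj_apply, smul_eq_mul]
  ring
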